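/- arXiv:math/0402407 — 2 statements merged into one kernel-verified Lean document; each statement's English description precedes it below -/
import Mathlib

section
/- If four complex n×n matrices α₁, α₂, α₃, β satisfy αᵢαⱼ + αⱼαᵢ = 2δᵢⱼ·I, αᵢβ + βαᵢ = 0, and β² = I, then the dimension n is even. -/
theorem dirac_dimension_even (n : ℕ) (α : Fin 3 → Matrix (Fin n) (Fin n) ℂ)
    (β : Matrix (Fin n) (Fin n) ℂ)
    (hαα : ∀ i j, α i * α j + α j * α i = (2 : ℂ) • (if i = j then (1 : Matrix (Fin n) (Fin n) ℂ) else 0))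
    (hαβ : ∀ i, α i * β + β * α i = 0)
    (hβ : β * β = 1) : Even n := by
  have hα0 : α 0 * α 0 = 1 := by
    have h := hαα 0 0
    simp only [if_pos rfl] at h
    have h2 : (2:ℂ) • (α 0 * α 0) = (2:ℂ) • (1 : Matrix (Fin n) (Fin n) ℂ) := by
      rw [two_smul]; exact h
    exact smul_right_injective _ (by norm_num : (2:ℂ) ≠ 0) h2
  have hdα : (α 0).det ≠ 0 := by
    intro h
    have : (α 0).det * (α 0).det = 1 := by
      rw [← Matrix.det_mul, hα0, Matrix.det_one]
    rw [h, mul_zero] at this; exact zero_ne_one this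
  have hdβ : β.det ≠ 0 := by
    intro h
    have : β.det * β.det = 1 := by rw [← Matrix.det_mul, hβ, Matrix.det_one]
    rw [h, mul_zero] at this; exact zero_ne_one this
  have hanti : α 0 * β = -(β * α 0) := by
    have h := hαβ 0
    have := add_eq_zero_iff_eq_neg.mp h
    exact this
  have hdet : (α 0).det * β.det = (-1:ℂ)^n * (β.det * (α 0).det) := by
    calc (α 0).det * β.det = (α 0 * β).det := (Matrix.det_mul _ _).symm
    _ = (-(β * α 0)).det := by rw [hanti]
    _ = (-1:ℂ)^n * (β * α 0).det := by
        rw [Matrix.det_neg, Fintype.card_fin]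
    _ = (-1:ℂ)^n * (β.det * (α 0).det) := by rw [Matrix.det_mul]
  have hne : (-1:ℂ)^n = 1 := by
    have h1 : (α 0).det * β.det ≠ 0 := mul_ne_zero hdα hdβ
    have h2 : (α 0).det * β.det = (-1:ℂ)^n * ((α 0).det * β.det) := by
      linear_combination hdet
    have h3 : (-1:ℂ)^n * ((α 0).det * β.det) = 1 * ((α 0).det * β.det) := by
      rw [← h2, one_mul]
    exact mul_right_cancel₀ h1 h3
  exact (neg_one_pow_eq_one_iff_even (by norm_num : (-1:ℂ) ≠ 1)).mp hne
end

section
/- There do not exist 2×2 complex matrices α₁, α₂, α₃, β that pairwise anticommute and each square to the identity. -/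
open Matrix

theorem no_four_anticommuting_two_by_two :
    ¬ ∃ M : Fin 4 → Matrix (Fin 2) (Fin 2) ℂ,
      (∀ i j, i ≠ j → M i * M j + M j * M i = 0) ∧ (∀ i, M i * M i = 1) := by
  rintro ⟨M, hac, hsq⟩
  have htr : ∀ i, (M i).trace = 0 := by
    intro i
    obtain ⟨j, hij⟩ := exists_ne i
    have h1 : M i * M j = - (M j * M i) := by
      have h := hac i j hij.symm
      linear_combination (norm := noncomm_ring) h
    have h2 : (M i).trace = -(M i).trace := by
      conv_lhs => rw [← mul_one (M i), ← hsq j, ← mul_assoc, h1]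
      rw [neg_mul, trace_neg, trace_mul_comm, ← mul_assoc, hsq j, one_mul]
    have : (2 : ℂ) * (M i).trace = 0 := by linear_combination h2
    simpa using this
  have htr2 : ∀ i j, i ≠ j → (M i * M j).trace = 0 := by
    intro i j hij
    have h := congrArg Matrix.trace (hac i j hij)
    simp only [trace_add, trace_zero] at h
    rw [trace_mul_comm (M j) (M i)] at h
    have : (2 : ℂ) * (M i * M j).trace = 0 := by linear_combination h
    simpa using this
  set N : Fin 5 → Matrix (Fin 2) (Fin 2) ℂ := Fin.cons 1 M with hN
  have hpair : ∀ i j, (N i * N j).trace = if i = j then 2 else 0 := by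
    intro i j
    induction i using Fin.cases with
    | zero =>
      induction j using Fin.cases with
      | zero => simp [hN]
      | succ j' => simp [hN, htr j', (Fin.succ_ne_zero j').symm]
    | succ i' =>
      induction j using Fin.cases with
      | zero => simp [hN, trace_mul_comm, htr i', Fin.succ_ne_zero i']
      | succ j' =>
        by_cases h : i' = j'
        · subst h; simp [hN, hsq i']
        · simp [hN, htr2 i' j' h, Fin.succ_inj, h]
  have hli : LinearIndependent ℂ N := by
    rw [Fintype.linearIndependent_iff]
    intro g hg j
    have h2 : ∑ i, g i * (N i * N j).trace = 0 := by
      calc ∑ i, g i * (N i * N j).trace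
          = ((∑ i, g i • N i) * N j).trace := by
            rw [Finset.sum_mul, trace_sum]
            exact Finset.sum_congr rfl fun i _ => by
              rw [smul_mul_assoc, trace_smul, smul_eq_mul]
        _ = 0 := by rw [hg, zero_mul, trace_zero]
    rw [Finset.sum_congr rfl (fun i _ => by rw [hpair i j])] at h2
    simp [Finset.sum_ite_eq', mul_ite] at h2
    exact h2
  have hcard := hli.fintype_card_le_finrank
  simp [Module.finrank_matrix] at hcard
end
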